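/- (Lemma 4) Let λ > 0, let d, n ≥ 1, and let x_1, …, x_n ∈ ℝ^d satisfy ‖x_k‖₂ ≤ 1 for all k. For each k define A(k) = λ·I_d + Σ_{i=1}^{k} x_i x_iᵀ. Then Σ_{k=1}^{n} x_kᵀ A(k)^{−1} x_k ≤ 2d·log(1 + n/(dλ)). -/

import Mathlib

open Matrix

section Aux

variable {d : ℕ}

lemma vecMulVec_mulVec_eq (u v w : Fin d → ℝ) :
    (vecMulVec u v) *ᵥ w = (v ⬝ᵥ w) • u := by
  funext i
  simp only [mulVec, dotProduct, vecMulVec_apply, Pi.smul_apply, smul_eq_mul]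
  rw [Finset.sum_mul]
  exact Finset.sum_congr rfl fun j _ => by ring

lemma posSemidef_vecMulVec_self (v : Fin d → ℝ) : (vecMulVec v v).PosSemidef := by
  refine posSemidef_iff_dotProduct_mulVec.mpr ⟨?_, ?_⟩
  · ext i j
    simp [conjTranspose_apply, vecMulVec_apply, mul_comm]
  · intro y
    rw [vecMulVec_mulVec_eq]
    simp only [star_trivial, dotProduct_smul, smul_eq_mul]
    rw [dotProduct_comm]
    exact mul_self_nonneg _

lemma posDef_smul_one {lam : ℝ} (h : 0 < lam) :
    (lam • (1 : Matrix (Fin d) (Fin d) ℝ)).PosDef := by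
  refine posDef_iff_dotProduct_mulVec.mpr ⟨?_, ?_⟩
  · ext i j
    simp [conjTranspose_apply, Matrix.one_apply, Matrix.smul_apply, eq_comm]
  · intro y hy
    simp only [smul_mulVec, one_mulVec, star_trivial, dotProduct_smul, smul_eq_mul]
    exact mul_pos h (Matrix.dotProduct_star_self_pos_iff.mpr hy |>.trans_eq (by simp) |>.trans_le le_rfl)

lemma A_posDef {lam : ℝ} (hlam : 0 < lam) (x : ℕ → Fin d → ℝ)
    (A : ℕ → Matrix (Fin d) (Fin d) ℝ)
    (hA : ∀ k, A k = lam • (1 : Matrix (Fin d) (Fin d) ℝ)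
        + ∑ i ∈ Finset.Icc 1 k, Matrix.vecMulVec (x i) (x i)) (k : ℕ) :
    (A k).PosDef := by
  rw [hA k]
  refine (posDef_smul_one hlam).add_posSemidef ?_
  exact Finset.sum_induction _ _ (fun a b ha hb => ha.add hb) Matrix.PosSemidef.zero
    (fun i _ => posSemidef_vecMulVec_self (x i))

/-- quadratic form of the inverse of a PosDef matrix is nonneg -/
lemma inv_form_nonneg {B : Matrix (Fin d) (Fin d) ℝ} (hB : B.PosDef) (v : Fin d → ℝ) :
    0 ≤ v ⬝ᵥ B⁻¹ *ᵥ v := by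
  have := hB.posSemidef.inv.dotProduct_mulVec_nonneg v
  simpa using this

/-- Sherman–Morrison for the quadratic form. -/
lemma sherman_morrison_form {B : Matrix (Fin d) (Fin d) ℝ} (hB : B.PosDef)
    (v : Fin d → ℝ) :
    v ⬝ᵥ (B + vecMulVec v v)⁻¹ *ᵥ v
      = (v ⬝ᵥ B⁻¹ *ᵥ v) / (1 + v ⬝ᵥ B⁻¹ *ᵥ v) := by
  set s : ℝ := v ⬝ᵥ B⁻¹ *ᵥ v with hs
  have hs0 : 0 ≤ s := inv_form_nonneg hB v
  have h1s : (0:ℝ) < 1 + s := by linarith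
  set M : Matrix (Fin d) (Fin d) ℝ := B + vecMulVec v v with hM
  have hMpd : M.PosDef := hB.add_posSemidef (posSemidef_vecMulVec_self v)
  have hBunit : IsUnit B.det := isUnit_iff_ne_zero.mpr hB.det_pos.ne'
  have hMw : M *ᵥ ((1 + s)⁻¹ • (B⁻¹ *ᵥ v)) = v := by
    rw [mulVec_smul]
    have hBBinv : B *ᵥ (B⁻¹ *ᵥ v) = v := by
      rw [mulVec_mulVec, Matrix.mul_nonsing_inv B (isUnit_iff_ne_zero.mpr hB.det_pos.ne'), one_mulVec]
    have : M *ᵥ (B⁻¹ *ᵥ v) = (1 + s) • v := by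
      rw [hM, add_mulVec, hBBinv, vecMulVec_mulVec_eq, ← hs, add_smul, one_smul]
    rw [this, smul_smul, inv_mul_cancel₀ h1s.ne', one_smul]
  have hMinv : M⁻¹ *ᵥ v = (1 + s)⁻¹ • (B⁻¹ *ᵥ v) := by
    conv_lhs => rw [← hMw]
    rw [mulVec_mulVec, Matrix.nonsing_inv_mul M (isUnit_iff_ne_zero.mpr hMpd.det_pos.ne'), one_mulVec]
  rw [hMinv, dotProduct_smul, smul_eq_mul, ← hs, inv_mul_eq_div]

/-- `M * vecMulVec u v = vecMulVec (M *ᵥ u) v`. -/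
lemma mul_vecMulVec_eq (M : Matrix (Fin d) (Fin d) ℝ) (u v : Fin d → ℝ) :
    M * vecMulVec u v = vecMulVec (M *ᵥ u) v := by
  ext i j
  simp only [Matrix.mul_apply, vecMulVec_apply, mulVec, dotProduct]
  rw [Finset.sum_mul]
  exact Finset.sum_congr rfl fun k _ => by ring

/-- Matrix determinant lemma specialised. -/
lemma det_add_vecMulVec {B : Matrix (Fin d) (Fin d) ℝ} (hB : B.PosDef)
    (v : Fin d → ℝ) :
    (B + vecMulVec v v).det = B.det * (1 + v ⬝ᵥ B⁻¹ *ᵥ v) := by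
  have hBunit : IsUnit B.det := isUnit_iff_ne_zero.mpr hB.det_pos.ne'
  have h1 : B + vecMulVec v v = B * (1 + B⁻¹ * vecMulVec v v) := by
    rw [Matrix.mul_add, Matrix.mul_one, ← Matrix.mul_assoc,
      Matrix.mul_nonsing_inv B hBunit, Matrix.one_mul]
  rw [h1, Matrix.det_mul]
  congr 1
  rw [mul_vecMulVec_eq, vecMulVec_eq (Fin 1),
    Matrix.det_one_add_replicateCol_mul_replicateRow (B⁻¹ *ᵥ v) v]

end Aux

theorem elliptical_potential_bound (lam : ℝ) (hlam : 0 < lam)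
    (d n : ℕ) (hd : 1 ≤ d) (hn : 1 ≤ n)
    (x : ℕ → Fin d → ℝ) (hx : ∀ k, Real.sqrt (x k ⬝ᵥ x k) ≤ 1)
    (A : ℕ → Matrix (Fin d) (Fin d) ℝ)
    (hA : ∀ k, A k = lam • (1 : Matrix (Fin d) (Fin d) ℝ)
        + ∑ i ∈ Finset.Icc 1 k, Matrix.vecMulVec (x i) (x i)) :
    ∑ k ∈ Finset.Icc 1 n, x k ⬝ᵥ (A k)⁻¹.mulVec (x k)
      ≤ 2 * d * Real.log (1 + (n : ℝ) / (d * lam)) := by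
  have hApd : ∀ k, (A k).PosDef := A_posDef hlam x A hA
  have hdR : (0:ℝ) < d := by exact_mod_cast hd
  -- step decomposition : A k = A (k-1) + x_k x_kᵀ for k ≥ 1
  have hstep : ∀ k, 1 ≤ k → A k = A (k-1) + vecMulVec (x k) (x k) := by
    intro k hk
    obtain ⟨m, rfl⟩ : ∃ m, k = m + 1 := ⟨k - 1, by omega⟩
    simp only [Nat.add_sub_cancel]
    rw [hA (m+1), hA m, Finset.sum_Icc_succ_top (Nat.le_add_left 1 m), add_assoc]
  -- per-step bound by log ratio
  have hterm : ∀ k, 1 ≤ k →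
      x k ⬝ᵥ (A k)⁻¹ *ᵥ x k ≤ Real.log ((A k).det) - Real.log ((A (k-1)).det) := by
    intro k hk
    set B := A (k-1) with hB
    have hBpd : B.PosDef := hApd (k-1)
    set s : ℝ := x k ⬝ᵥ B⁻¹ *ᵥ x k with hs
    have hs0 : 0 ≤ s := inv_form_nonneg hBpd (x k)
    have h1s : (0:ℝ) < 1 + s := by linarith
    have hform : x k ⬝ᵥ (A k)⁻¹ *ᵥ x k = s / (1 + s) := by
      rw [hstep k hk]; exact sherman_morrison_form hBpd (x k)
    have hdet : (A k).det = B.det * (1 + s) := by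
      rw [hstep k hk]; exact det_add_vecMulVec hBpd (x k)
    have hlog : Real.log ((A k).det) - Real.log (B.det) = Real.log (1 + s) := by
      rw [hdet, Real.log_mul hBpd.det_pos.ne' h1s.ne']
      ring
    rw [hform, hlog]
    -- s/(1+s) ≤ log(1+s)
    have := Real.log_le_sub_one_of_pos (x := (1+s)⁻¹) (by positivity)
    rw [Real.log_inv] at this
    have hle : s / (1 + s) ≤ Real.log (1 + s) := by
      have h' : (1+s)⁻¹ - 1 = -(s/(1+s)) := by field_simp; ring
      linarith [this, h'.symm ▸ this]
    exact hle
  -- telescoping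
  have htel : ∀ m : ℕ, ∑ k ∈ Finset.Icc 1 m,
      (Real.log ((A k).det) - Real.log ((A (k-1)).det))
      = Real.log ((A m).det) - Real.log ((A 0).det) := by
    intro m
    induction m with
    | zero => simp
    | succ m ih =>
      rw [Finset.sum_Icc_succ_top (by omega), ih]
      simp only [Nat.add_sub_cancel]
      ring
  have hsum1 : ∑ k ∈ Finset.Icc 1 n, x k ⬝ᵥ (A k)⁻¹ *ᵥ x k
      ≤ Real.log ((A n).det) - Real.log ((A 0).det) := by
    rw [← htel n]
    exact Finset.sum_le_sum fun k hk => hterm k (Finset.mem_Icc.mp hk).1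
  -- det A 0 = lam ^ d
  have hA0 : (A 0).det = lam ^ d := by
    rw [hA 0]
    simp [Matrix.det_smul]
  -- trace bound
  have hxsq : ∀ k, x k ⬝ᵥ x k ≤ 1 := by
    intro k
    have h0 : 0 ≤ x k ⬝ᵥ x k := by
      simpa using dotProduct_star_self_nonneg (x k)
    nlinarith [hx k, Real.sq_sqrt h0, Real.sqrt_nonneg (x k ⬝ᵥ x k)]
  have htrace : (A n).trace ≤ d * lam + n := by
    rw [hA n]
    rw [Matrix.trace_add, Matrix.trace_smul, Matrix.trace_one, Matrix.trace_sum]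
    have h1 : ∀ i, (vecMulVec (x i) (x i)).trace = x i ⬝ᵥ x i := by
      intro i
      simp [Matrix.trace, Matrix.diag, vecMulVec_apply, dotProduct]
    have h2 : ∑ i ∈ Finset.Icc 1 n, (vecMulVec (x i) (x i)).trace ≤ n := by
      calc ∑ i ∈ Finset.Icc 1 n, (vecMulVec (x i) (x i)).trace
          ≤ ∑ i ∈ Finset.Icc 1 n, 1 := Finset.sum_le_sum fun i _ => (h1 i) ▸ hxsq i
        _ = n := by simp
    simp only [smul_eq_mul, Fintype.card_fin]
    calc lam * d + ∑ i ∈ Finset.Icc 1 n, (vecMulVec (x i) (x i)).trace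
        ≤ lam * d + n := by linarith
      _ = d * lam + n := by ring
  -- eigenvalue AM-GM : det ≤ (trace / d)^d
  have hdetle : (A n).det ≤ (lam + n / d) ^ d := by
    have hH := (hApd n).isHermitian
    set μ := hH.eigenvalues with hμ
    have hμ0 : ∀ i, 0 ≤ μ i := (hApd n).posSemidef.eigenvalues_nonneg
    have hdet : (A n).det = ∏ i, μ i := by
      have := hH.det_eq_prod_eigenvalues
      simpa using this
    have htr : (A n).trace = ∑ i, μ i := by
      have hspec := hH.spectral_theorem
      have : (A n).trace = (Matrix.diagonal (RCLike.ofReal ∘ μ) : Matrix (Fin d) (Fin d) ℝ).trace := by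
        rw [hH.trace_eq_sum_eigenvalues, Matrix.trace_diagonal]
        simp [hμ]
      rw [this, Matrix.trace_diagonal]
      simp
    -- AM-GM
    have hAM : ∏ i, μ i ≤ ((∑ i, μ i) / d) ^ d := by
      have hw : ∀ i ∈ Finset.univ (α := Fin d), (0:ℝ) ≤ (d:ℝ)⁻¹ := fun _ _ => by positivity
      have hw1 : ∑ _i ∈ Finset.univ (α := Fin d), (d:ℝ)⁻¹ = 1 := by
        simp [Finset.card_univ]
        field_simp
      have hgm := Real.geom_mean_le_arith_mean_weighted Finset.univ
        (fun _ => (d:ℝ)⁻¹) μ hw hw1 (fun i _ => hμ0 i)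
      -- hgm : ∏ i, μ i ^ (d:ℝ)⁻¹ ≤ ∑ i, (d:ℝ)⁻¹ * μ i
      have hL : (∏ i, μ i ^ ((d:ℝ)⁻¹)) ^ (d:ℕ) = ∏ i, μ i := by
        rw [← Finset.prod_pow]
        refine Finset.prod_congr rfl fun i _ => ?_
        rw [← Real.rpow_natCast (μ i ^ ((d:ℝ)⁻¹)) d, ← Real.rpow_mul (hμ0 i)]
        rw [inv_mul_cancel₀ hdR.ne', Real.rpow_one]
      have hR : ∑ i, (d:ℝ)⁻¹ * μ i = (∑ i, μ i) / d := by
        rw [← Finset.mul_sum]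
        ring
      calc ∏ i, μ i = (∏ i, μ i ^ ((d:ℝ)⁻¹)) ^ (d:ℕ) := hL.symm
        _ ≤ ((∑ i, μ i) / d) ^ (d:ℕ) := by
            apply pow_le_pow_left₀ (Finset.prod_nonneg fun i _ => Real.rpow_nonneg (hμ0 i) _)
            rw [← hR]
            exact hgm
    have htr_le : (∑ i, μ i) / d ≤ lam + n / d := by
      rw [← htr]
      rw [div_le_iff₀ hdR]
      calc (A n).trace ≤ d * lam + n := htrace
        _ = (lam + n / d) * d := by field_simp
    calc (A n).det = ∏ i, μ i := hdet
      _ ≤ ((∑ i, μ i) / d) ^ d := hAM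
      _ ≤ (lam + n / d) ^ d := by
          apply pow_le_pow_left₀ _ htr_le
          exact div_nonneg (Finset.sum_nonneg fun i _ => hμ0 i) hdR.le
  -- combine
  have hlam_n_pos : (0:ℝ) < lam + n / d := by positivity
  have hlogle : Real.log ((A n).det) ≤ d * Real.log (lam + n / d) := by
    calc Real.log ((A n).det) ≤ Real.log ((lam + n / d) ^ d) :=
          Real.log_le_log (hApd n).det_pos hdetle
      _ = d * Real.log (lam + n / d) := by rw [Real.log_pow]
  have hA0log : Real.log ((A 0).det) = d * Real.log lam := by
    rw [hA0, Real.log_pow]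
  have hkey : Real.log ((A n).det) - Real.log ((A 0).det)
      ≤ d * Real.log (1 + (n:ℝ) / (d * lam)) := by
    rw [hA0log]
    have : Real.log (lam + n / d) - Real.log lam = Real.log (1 + (n:ℝ) / (d * lam)) := by
      rw [← Real.log_div hlam_n_pos.ne' hlam.ne']
      congr 1
      field_simp
    calc Real.log ((A n).det) - d * Real.log lam
        ≤ d * Real.log (lam + n / d) - d * Real.log lam := by linarith
      _ = d * (Real.log (lam + n / d) - Real.log lam) := by ring
      _ = d * Real.log (1 + (n:ℝ) / (d * lam)) := by rw [this]
  have hlognn : 0 ≤ Real.log (1 + (n:ℝ) / (d * lam)) := by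
    apply Real.log_nonneg
    have : 0 ≤ (n:ℝ) / (d * lam) := by positivity
    linarith
  calc ∑ k ∈ Finset.Icc 1 n, x k ⬝ᵥ (A k)⁻¹.mulVec (x k)
      ≤ Real.log ((A n).det) - Real.log ((A 0).det) := hsum1
    _ ≤ d * Real.log (1 + (n:ℝ) / (d * lam)) := hkey
    _ ≤ 2 * d * Real.log (1 + (n:ℝ) / (d * lam)) := by nlinarith
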